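/- Let k be a field, L a finite-dimensional Lie algebra over k, H a nilpotent Lie subalgebra of L, and B a symmetric bilinear form on L that is invariant, i.e. B([x,y],z) = B(x,[y,z]) for all x,y,z ∈ L. If α, β : H → k are two functions with α + β ≠ 0 (as a function on H), then the generalized weight spaces L_α and L_β of the adjoint action of H on L are orthogonal with respect to B, i.e. B(u,v) = 0 for all u ∈ L_α and v ∈ L_β. In particular, when H is a Cartan subalgebra, every root space L_α (α ≠ 0) is B-orthogonal to the zero weight space (hence to H) and to every root space L_β with β ≠ −α. -/

import Mathlib

lemma aux_bilin_gen_eigen {k L : Type*} [Field k] [AddCommGroup L] [Module k L]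
    (B : LinearMap.BilinForm k L) (T : Module.End k L) (a b : k) (hab : a + b ≠ 0)
    (hT : ∀ x y : L, B (T x) y = - B x (T y)) :
    ∀ (n p q : ℕ) (u v : L), p + q = n →
      ((T - a • 1) ^ p) u = 0 → ((T - b • 1) ^ q) v = 0 → B u v = 0 := by
  intro n
  induction n with
  | zero =>
    intro p q u v hpq hu hv
    obtain ⟨hp, hq⟩ := Nat.add_eq_zero.mp hpq
    subst hp
    simp only [pow_zero, Module.End.one_apply] at hu
    simp [hu]
  | succ n ih =>
    intro p q u v hpq hu hv
    cases p with
    | zero =>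
      simp only [pow_zero, Module.End.one_apply] at hu
      simp [hu]
    | succ p =>
      cases q with
      | zero =>
        simp only [pow_zero, Module.End.one_apply] at hv
        simp [hv]
      | succ q =>
        have hu' : ((T - a • 1) ^ p) ((T - a • 1) u) = 0 := by
          rw [← Module.End.mul_apply, ← pow_succ]; exact hu
        have hv' : ((T - b • 1) ^ q) ((T - b • 1) v) = 0 := by
          rw [← Module.End.mul_apply, ← pow_succ]; exact hv
        have h1 : B ((T - a • 1) u) v = 0 := by
          apply ih p (q + 1) _ _ (by omega) hu' hv
        have h2 : B u ((T - b • 1) v) = 0 := by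
          apply ih (p + 1) q _ _ (by omega) hu hv'
        have key : B ((T - a • 1) u) v + B u ((T - b • 1) v) = -(a + b) * B u v := by
          simp only [LinearMap.sub_apply, LinearMap.smul_apply, Module.End.one_apply,
            map_sub, map_smul, LinearMap.sub_apply, LinearMap.smul_apply]
          rw [hT]
          simp only [Module.End.one_apply, smul_eq_mul]
          ring
        rw [h1, h2, add_zero] at key
        have : (-(a + b)) * B u v = 0 := key.symm
        rcases mul_eq_zero.mp this with h | h
        · exact absurd (neg_eq_zero.mp h) hab
        · exact h

/-- **Orthogonality of generalized weight spaces with respect to an invariant form.**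
Let `k` be a field, `L` a finite-dimensional Lie algebra over `k`, `H` a nilpotent Lie
subalgebra of `L`, and `B` an invariant symmetric bilinear form on `L`.  If `α, β : H → k`
satisfy `α + β ≠ 0`, then the generalized weight spaces (root spaces) `L_α` and `L_β` of the
adjoint action of `H` on `L` are orthogonal with respect to `B`. -/
theorem genWeightSpace_orthogonal_of_invariant_form
    (k : Type*) [Field k] (L : Type*) [LieRing L] [LieAlgebra k L]
    [FiniteDimensional k L]
    (H : LieSubalgebra k L) [LieRing.IsNilpotent H]
    (B : LinearMap.BilinForm k L)
    (hBsymm : ∀ x y : L, B x y = B y x)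
    (hBinv : ∀ x y z : L, B ⁅x, y⁆ z = B x ⁅y, z⁆)
    (α β : H → k) (hαβ : α + β ≠ 0)
    (u v : L)
    (hu : u ∈ LieAlgebra.rootSpace H α)
    (hv : v ∈ LieAlgebra.rootSpace H β) :
    B u v = 0 := by
  obtain ⟨z, hz⟩ : ∃ z : H, α z + β z ≠ 0 := by
    by_contra h
    push_neg at h
    exact hαβ (funext fun z => h z)
  rw [LieModule.mem_genWeightSpace] at hu hv
  obtain ⟨p, hp⟩ := hu z
  obtain ⟨q, hq⟩ := hv z
  refine aux_bilin_gen_eigen B (LieModule.toEnd k H L z) (α z) (β z) hz ?_ (p + q) p q u v rfl hp hq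
  intro x y
  have h := hBinv x (z : L) y
  have h' : B ⁅(z : L), x⁆ y = - B x ⁅(z : L), y⁆ := by
    rw [← h, ← lie_skew x (z : L), map_neg, LinearMap.neg_apply, neg_neg]
  simpa [LieModule.toEnd_apply_apply] using h'
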